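/- Let f: [0,L] → [0,∞) be continuous, M-Lipschitz, with f(0) = a, f(L) = b, a,b ≥ 0, and M·L ≥ |b-a|. If additionally a + b ≥ M·L, then the minimal possible value of ∫₀^L f is (−M²L² + 2ML(a+b) + (a−b)²)/(4M); if a + b < M·L, the infimum of ∫₀^L f equals (a² + b²)/(2M). -/

import Mathlib

/-- Admissible densities on `[0,L]`: continuous, nonnegative, `M`-Lipschitz,
with boundary values `a` and `b`. -/
def Admissible (M L a b : ℝ) (f : ℝ → ℝ) : Prop :=
  ContinuousOn f (Set.Icc 0 L) ∧ (∀ x ∈ Set.Icc 0 L, 0 ≤ f x) ∧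
  (∀ x ∈ Set.Icc 0 L, ∀ y ∈ Set.Icc 0 L, |f x - f y| ≤ M * |x - y|) ∧
  f 0 = a ∧ f L = b

private lemma int_lin (c d u v : ℝ) :
    (∫ x in u..v, (c + d * x)) = c * (v - u) + d * ((v ^ 2 - u ^ 2) / 2) := by
  have hi : IntervalIntegrable (fun x : ℝ => d * x) MeasureTheory.volume u v :=
    (continuous_const.mul continuous_id').intervalIntegrable u v
  rw [intervalIntegral.integral_add intervalIntegrable_const hi,
    intervalIntegral.integral_const, intervalIntegral.integral_const_mul,
    integral_id]
  simp only [smul_eq_mul]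
  ring

set_option maxHeartbeats 1000000

/-- If `a + b ≥ ML` the minimal possible integral of an admissible
function is `(-M²L² + 2ML(a+b) + (a-b)²)/(4M)` (attained); if `a + b < ML` the
infimum of the possible integrals equals `(a² + b²)/(2M)`. -/
theorem min_area_inverted_hat
    (M L a b : ℝ) (hM : 0 < M) (hL : 0 < L) (ha : 0 ≤ a) (hb : 0 ≤ b)
    (hML : |b - a| ≤ M * L) :
    (M * L ≤ a + b →
      IsLeast {I : ℝ | ∃ f : ℝ → ℝ, Admissible M L a b f ∧ (∫ x in (0:ℝ)..L, f x) = I}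
        ((-(M ^ 2 * L ^ 2) + 2 * M * L * (a + b) + (a - b) ^ 2) / (4 * M))) ∧
    (a + b < M * L →
      sInf {I : ℝ | ∃ f : ℝ → ℝ, Admissible M L a b f ∧ (∫ x in (0:ℝ)..L, f x) = I}
        = (a ^ 2 + b ^ 2) / (2 * M)) := by
  have hba : b - a ≤ M * L := (abs_le.mp hML).2
  have hab : a - b ≤ M * L := by have := (abs_le.mp hML).1; linarith
  set g : ℝ → ℝ := fun x => max (a - M * x) (max (b - M * (L - x)) 0) with hg
  have hgc : Continuous g := by
    apply Continuous.max
    · continuity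
    · exact Continuous.max (by continuity) continuous_const
  have hg_lip : ∀ x y : ℝ, |g x - g y| ≤ M * |x - y| := by
    intro x y
    have h1 : |(a - M * x) - (a - M * y)| ≤ M * |x - y| := by
      rw [show (a - M * x) - (a - M * y) = M * (y - x) by ring, abs_mul,
        abs_of_pos hM, abs_sub_comm]
    have h2 : |max (b - M * (L - x)) 0 - max (b - M * (L - y)) 0| ≤ M * |x - y| := by
      refine le_trans (abs_max_sub_max_le_max _ _ _ _) ?_
      rw [show (b - M * (L - x)) - (b - M * (L - y)) = M * (x - y) by ring, abs_mul,
        abs_of_pos hM]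
      simp [mul_nonneg hM.le (abs_nonneg (x - y))]
    exact le_trans (abs_max_sub_max_le_max _ _ _ _) (max_le h1 h2)
  have hg0 : g 0 = a := by
    show max (a - M * 0) (max (b - M * (L - 0)) 0) = a
    rw [mul_zero, sub_zero, sub_zero]
    exact max_eq_left (max_le (by linarith) ha)
  have hgL : g L = b := by
    show max (a - M * L) (max (b - M * (L - L)) 0) = b
    rw [sub_self, mul_zero, sub_zero, max_eq_left hb]
    exact max_eq_right (by linarith)
  have hg_nonneg : ∀ x : ℝ, 0 ≤ g x := fun x =>
    le_trans (le_max_right _ 0) (le_max_right _ _)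
  have hg_adm : Admissible M L a b g :=
    ⟨hgc.continuousOn, fun x _ => hg_nonneg x, fun x _ y _ => hg_lip x y, hg0, hgL⟩
  -- lower bound: any admissible f dominates g
  have hdom : ∀ f : ℝ → ℝ, Admissible M L a b f →
      (∫ x in (0:ℝ)..L, g x) ≤ ∫ x in (0:ℝ)..L, f x := by
    intro f ⟨hfc, hfnn, hflip, hf0, hfL⟩
    have hf_int : IntervalIntegrable f MeasureTheory.volume 0 L := by
      apply ContinuousOn.intervalIntegrable
      rwa [Set.uIcc_of_le hL.le]
    apply intervalIntegral.integral_mono_on hL.le (hgc.intervalIntegrable _ _) hf_int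
    intro x hx
    have h0 : (0:ℝ) ∈ Set.Icc 0 L := ⟨le_refl _, hL.le⟩
    have hLm : L ∈ Set.Icc (0:ℝ) L := ⟨hL.le, le_refl _⟩
    have h1 : a - M * x ≤ f x := by
      have h := hflip x hx 0 h0
      rw [hf0] at h
      have habs : |x - (0:ℝ)| = x := by rw [sub_zero, abs_of_nonneg hx.1]
      rw [habs] at h
      linarith [(abs_le.mp h).1]
    have h2 : b - M * (L - x) ≤ f x := by
      have h := hflip x hx L hLm
      rw [hfL] at h
      have habs : |x - L| = L - x := by
        rw [abs_sub_comm, abs_of_nonneg (by linarith [hx.2])]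
      rw [habs] at h
      linarith [(abs_le.mp h).1]
    exact max_le h1 (max_le h2 (hfnn x hx))
  set S := {I : ℝ | ∃ f : ℝ → ℝ, Admissible M L a b f ∧ (∫ x in (0:ℝ)..L, f x) = I} with hS
  have hleast : IsLeast S (∫ x in (0:ℝ)..L, g x) := by
    constructor
    · exact ⟨g, hg_adm, rfl⟩
    · rintro I ⟨f, hf, rfl⟩; exact hdom f hf
  constructor
  · -- case a + b ≥ ML
    intro hcase
    have hval : (∫ x in (0:ℝ)..L, g x)
        = (-(M ^ 2 * L ^ 2) + 2 * M * L * (a + b) + (a - b) ^ 2) / (4 * M) := by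
      set x₁ : ℝ := (a - b + M * L) / (2 * M) with hx₁
      have hx₁0 : 0 ≤ x₁ := by
        apply div_nonneg _ (by linarith); linarith
      have hx₁L : x₁ ≤ L := by
        rw [div_le_iff₀ (by linarith)]; linarith
      have hx₁v : 2 * M * x₁ = a - b + M * L := by
        rw [hx₁]; field_simp
      have hsplit : (∫ x in (0:ℝ)..x₁, g x) + (∫ x in x₁..L, g x)
          = ∫ x in (0:ℝ)..L, g x :=
        intervalIntegral.integral_add_adjacent_intervals
          (hgc.intervalIntegrable _ _) (hgc.intervalIntegrable _ _)
      have e1 : (∫ x in (0:ℝ)..x₁, g x) = ∫ x in (0:ℝ)..x₁, (a + (-M) * x) := by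
        apply intervalIntegral.integral_congr
        intro x hx
        rw [Set.uIcc_of_le hx₁0] at hx
        have hxle : x ≤ x₁ := hx.2
        have hx0 : 0 ≤ x := hx.1
        have hmx : 2 * M * x ≤ 2 * M * x₁ := by nlinarith
        have hv : b - M * (L - x) ≤ a - M * x := by linarith
        have hv0 : 0 ≤ a - M * x := by linarith
        simp only [hg]
        rw [max_eq_left (max_le hv hv0)]; ring
      have e2 : (∫ x in x₁..L, g x) = ∫ x in x₁..L, ((b - M * L) + M * x) := by
        apply intervalIntegral.integral_congr
        intro x hx
        rw [Set.uIcc_of_le hx₁L] at hx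
        have hxge : x₁ ≤ x := hx.1
        have hmx : 2 * M * x₁ ≤ 2 * M * x := by nlinarith
        have hv : a - M * x ≤ b - M * (L - x) := by linarith
        have hv0 : 0 ≤ b - M * (L - x) := by linarith
        simp only [hg]
        rw [max_eq_right (le_trans hv (le_max_left _ _)), max_eq_left hv0]; ring
      rw [← hsplit, e1, e2, int_lin, int_lin]
      rw [hx₁]
      field_simp
      ring
    rw [← hval]; exact hleast
  · -- case a + b < ML
    intro hcase
    have hval : (∫ x in (0:ℝ)..L, g x) = (a ^ 2 + b ^ 2) / (2 * M) := by
      set c : ℝ := a / M with hc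
      set d : ℝ := L - b / M with hd
      have hc0 : 0 ≤ c := div_nonneg ha hM.le
      have hcd : c ≤ d := by
        rw [hc, hd, le_sub_iff_add_le, ← add_div]
        exact le_of_lt ((div_lt_iff₀ hM).mpr (by linarith))
      have hdL : d ≤ L := by
        rw [hd]; have : 0 ≤ b / M := div_nonneg hb hM.le; linarith
      have hMc : M * c = a := by rw [hc]; field_simp
      have hMd : M * (L - d) = b := by rw [hd]; field_simp; ring
      have hmul : ∀ u v : ℝ, u ≤ v → M * u ≤ M * v := fun u v h =>
        mul_le_mul_of_nonneg_left h hM.le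
      have hsplit1 : (∫ x in (0:ℝ)..c, g x) + (∫ x in c..L, g x)
          = ∫ x in (0:ℝ)..L, g x :=
        intervalIntegral.integral_add_adjacent_intervals
          (hgc.intervalIntegrable _ _) (hgc.intervalIntegrable _ _)
      have hsplit2 : (∫ x in c..d, g x) + (∫ x in d..L, g x)
          = ∫ x in c..L, g x :=
        intervalIntegral.integral_add_adjacent_intervals
          (hgc.intervalIntegrable _ _) (hgc.intervalIntegrable _ _)
      have e1 : (∫ x in (0:ℝ)..c, g x) = ∫ x in (0:ℝ)..c, (a + (-M) * x) := by
        apply intervalIntegral.integral_congr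
        intro x hx
        rw [Set.uIcc_of_le hc0] at hx
        have h1 : 0 ≤ a - M * x := by linarith [hmul x c hx.2, hMc]
        have h2 : b - M * (L - x) ≤ 0 := by
          linarith [hmul (L - d) (L - x) (by linarith [hx.2, hcd]), hMd]
        simp only [hg]
        rw [max_eq_right h2, max_eq_left h1]; ring
      have e2 : (∫ x in c..d, g x) = ∫ x in c..d, (0:ℝ) := by
        apply intervalIntegral.integral_congr
        intro x hx
        rw [Set.uIcc_of_le hcd] at hx
        have h1 : a - M * x ≤ 0 := by linarith [hmul c x hx.1, hMc]
        have h2 : b - M * (L - x) ≤ 0 := by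
          linarith [hmul (L - d) (L - x) (by linarith [hx.2]), hMd]
        simp only [hg]
        rw [max_eq_right h2, max_eq_right h1]
      have e3 : (∫ x in d..L, g x) = ∫ x in d..L, ((b - M * L) + M * x) := by
        apply intervalIntegral.integral_congr
        intro x hx
        rw [Set.uIcc_of_le hdL] at hx
        have h2 : 0 ≤ b - M * (L - x) := by
          linarith [hmul (L - x) (L - d) (by linarith [hx.1]), hMd]
        have h1 : a - M * x ≤ b - M * (L - x) := by
          linarith [hmul d x hx.1, hmul c d hcd, hMc, hMd]
        simp only [hg]
        rw [max_eq_right (le_trans h1 (le_max_left _ _)), max_eq_left h2]; ring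
      rw [← hsplit1, ← hsplit2, e1, e2, e3, int_lin, int_lin]
      simp only [intervalIntegral.integral_zero]
      rw [hc, hd]
      field_simp
      ring
    rw [hleast.csInf_eq, hval]
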